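/- Let A and B be groups and W ⊆ F_∞ a set of words. Every element y of the verbal product A ∗_W B has a unique writing of the form y = a·b·u with a ∈ A, b ∈ B and u ∈ [A,B]^w. Moreover, if y' = a'·b'·u' with a' ∈ A, b' ∈ B, u' ∈ [A,B]^w, then the product yy' has the form yy' = (aa')·(bb')·ũ for some ũ ∈ [A,B]^w. -/

import Mathlib

open Monoid

/-- The verbal subgroup `W(G)`: the subgroup of `G` generated by all evaluations of the
words of `W` at tuples of elements of `G`. -/
def verbalSubgroup (W : Set (FreeGroup ℕ)) (G : Type*) [Group G] : Subgroup G :=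
  Subgroup.closure {x | ∃ w ∈ W, ∃ f : ℕ → G, FreeGroup.lift f w = x}

theorem lift_comp_eval {G H : Type*} [Group G] [Group H] (φ : G →* H) (f : ℕ → G)
    (w : FreeGroup ℕ) : φ (FreeGroup.lift f w) = FreeGroup.lift (φ ∘ f) w := by
  have h : φ.comp (FreeGroup.lift f) = FreeGroup.lift (φ ∘ f) :=
    FreeGroup.ext_hom _ _ (fun a => by simp)
  exact DFunLike.congr_fun h w

theorem verbalSubgroup_map_le {G H : Type*} [Group G] [Group H] (W : Set (FreeGroup ℕ))
    (φ : G →* H) : (verbalSubgroup W G).map φ ≤ verbalSubgroup W H := by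
  rw [verbalSubgroup, MonoidHom.map_closure, Subgroup.closure_le]
  rintro x ⟨y, ⟨w, hw, f, rfl⟩, rfl⟩
  exact Subgroup.subset_closure ⟨w, hw, φ ∘ f, (lift_comp_eval φ f w).symm⟩

/-- Verbal subgroups are normal. -/
instance verbalSubgroup_normal (W : Set (FreeGroup ℕ)) (G : Type*) [Group G] :
    (verbalSubgroup W G).Normal := by
  constructor
  intro n hn g
  have h := verbalSubgroup_map_le (G := G) (H := G) W (MulAut.conj g).toMonoidHom
  have h2 : (MulAut.conj g).toMonoidHom n ∈ verbalSubgroup W G := h ⟨n, hn, rfl⟩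
  simpa using h2

open scoped commutatorElement in
/-- The subgroup `[A,B]` of the free product `A ∗ B` generated by the commutators
`[a,b] = a * b * a⁻¹ * b⁻¹` with `a ∈ A`, `b ∈ B`. -/
def commSubgroup (A B : Type*) [Group A] [Group B] : Subgroup (Coprod A B) :=
  Subgroup.closure {x | ∃ (a : A) (b : B), x = ⁅(Coprod.inl a : Coprod A B), Coprod.inr b⁆}

section aux
variable {A B : Type*} [Group A] [Group B]
open scoped commutatorElement

theorem comm_gen_mem (a : A) (b : B) :
    ⁅(Coprod.inl a : Coprod A B), Coprod.inr b⁆ ∈ commSubgroup A B :=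
  Subgroup.subset_closure ⟨a, b, rfl⟩

theorem conj_inl_mem {n : Coprod A B} (hn : n ∈ commSubgroup A B) (a : A) :
    Coprod.inl a * n * (Coprod.inl a)⁻¹ ∈ commSubgroup A B := by
  induction hn using Subgroup.closure_induction with
  | mem x hx =>
    obtain ⟨a₀, b, rfl⟩ := hx
    have key : Coprod.inl a * ⁅(Coprod.inl a₀ : Coprod A B), Coprod.inr b⁆ * (Coprod.inl a)⁻¹
        = ⁅(Coprod.inl (a * a₀) : Coprod A B), Coprod.inr b⁆ *
          ⁅(Coprod.inl a : Coprod A B), Coprod.inr b⁆⁻¹ := by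
      simp only [commutatorElement_def, map_mul]
      group
    rw [key]
    exact mul_mem (comm_gen_mem _ _) (inv_mem (comm_gen_mem _ _))
  | one => simpa using one_mem _
  | mul x y hx hy ihx ihy =>
    have : Coprod.inl a * (x * y) * (Coprod.inl a)⁻¹
        = (Coprod.inl a * x * (Coprod.inl a)⁻¹) * (Coprod.inl a * y * (Coprod.inl a)⁻¹) := by
      group
    rw [this]; exact mul_mem ihx ihy
  | inv x hx ihx =>
    have : Coprod.inl a * x⁻¹ * (Coprod.inl a)⁻¹
        = (Coprod.inl a * x * (Coprod.inl a)⁻¹)⁻¹ := by group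
    rw [this]; exact inv_mem ihx

theorem conj_inr_mem {n : Coprod A B} (hn : n ∈ commSubgroup A B) (b : B) :
    Coprod.inr b * n * (Coprod.inr b)⁻¹ ∈ commSubgroup A B := by
  induction hn using Subgroup.closure_induction with
  | mem x hx =>
    obtain ⟨a, b₀, rfl⟩ := hx
    have key : Coprod.inr b * ⁅(Coprod.inl a : Coprod A B), Coprod.inr b₀⁆ * (Coprod.inr b)⁻¹
        = ⁅(Coprod.inl a : Coprod A B), Coprod.inr b⁆⁻¹ *
          ⁅(Coprod.inl a : Coprod A B), (Coprod.inr (b * b₀) : Coprod A B)⁆ := by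
      simp only [commutatorElement_def, map_mul]
      group
    rw [key]
    exact mul_mem (inv_mem (comm_gen_mem _ _)) (comm_gen_mem _ _)
  | one => simpa using one_mem _
  | mul x y hx hy ihx ihy =>
    have : Coprod.inr b * (x * y) * (Coprod.inr b)⁻¹
        = (Coprod.inr b * x * (Coprod.inr b)⁻¹) * (Coprod.inr b * y * (Coprod.inr b)⁻¹) := by
      group
    rw [this]; exact mul_mem ihx ihy
  | inv x hx ihx =>
    have : Coprod.inr b * x⁻¹ * (Coprod.inr b)⁻¹
        = (Coprod.inr b * x * (Coprod.inr b)⁻¹)⁻¹ := by group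
    rw [this]; exact inv_mem ihx

instance commSubgroup_normal : (commSubgroup A B).Normal := by
  constructor
  intro n hn g
  induction g using Coprod.induction_on' with
  | one => simpa using hn
  | inl_mul m x ih =>
    have : Coprod.inl m * x * n * (Coprod.inl m * x)⁻¹
        = Coprod.inl m * (x * n * x⁻¹) * (Coprod.inl m)⁻¹ := by group
    rw [this]; exact conj_inl_mem ih m
  | inr_mul m x ih =>
    have : Coprod.inr m * x * n * (Coprod.inr m * x)⁻¹
        = Coprod.inr m * (x * n * x⁻¹) * (Coprod.inr m)⁻¹ := by group
    rw [this]; exact conj_inr_mem ih m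

/-- The projection `A ∗ B →* A × B`. -/
def pmap (A B : Type*) [Group A] [Group B] : Coprod A B →* A × B :=
  Coprod.lift (MonoidHom.inl A B) (MonoidHom.inr A B)

theorem commSubgroup_eq_ker : commSubgroup A B = (pmap A B).ker := by
  apply le_antisymm
  · rw [commSubgroup, Subgroup.closure_le]
    rintro x ⟨a, b, rfl⟩
    have : pmap A B ⁅(Coprod.inl a : Coprod A B), Coprod.inr b⁆
        = ⁅pmap A B (Coprod.inl a), pmap A B (Coprod.inr b)⁆ := map_commutatorElement _ _ _
    simp only [SetLike.mem_coe, MonoidHom.mem_ker, this]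
    have h1 : pmap A B (Coprod.inl a) = (a, 1) := rfl
    have h2 : pmap A B (Coprod.inr b) = (1, b) := rfl
    rw [h1, h2, commutatorElement_def]
    ext <;> simp
  · intro x hx
    set q := QuotientGroup.mk' (commSubgroup A B)
    have hcomm : ∀ (a : A) (b : B),
        Commute (q.comp Coprod.inl a) (q.comp Coprod.inr b) := by
      intro a b
      rw [← commutatorElement_eq_one_iff_commute]
      simp only [MonoidHom.comp_apply]
      rw [← map_commutatorElement]
      exact (QuotientGroup.eq_one_iff _).2 (comm_gen_mem a b)
    set φ := MonoidHom.noncommCoprod (q.comp Coprod.inl) (q.comp Coprod.inr) hcomm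
    have hφ : φ.comp (pmap A B) = q := by
      apply Coprod.hom_ext <;> ext x <;>
        simp [φ, pmap, MonoidHom.noncommCoprod]
    have : q x = 1 := by
      rw [← hφ]
      simp only [MonoidHom.comp_apply, MonoidHom.mem_ker.mp hx, map_one]
    exact (QuotientGroup.eq_one_iff _).1 this

end aux

/-- The kernel of the verbal product: (the normal closure of) `W(A ∗ B) ∩ [A,B]`.
Since `W(A ∗ B) ∩ [A,B]` is in fact a normal subgroup of `A ∗ B`, taking the normal
closure does not change the subgroup. -/
def verbalProductKer (W : Set (FreeGroup ℕ)) (A B : Type*) [Group A] [Group B] :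
    Subgroup (Coprod A B) :=
  Subgroup.normalClosure ((verbalSubgroup W (Coprod A B) ⊓ commSubgroup A B : Subgroup _) : Set _)

instance verbalProductKer_normal (W : Set (FreeGroup ℕ)) (A B : Type*) [Group A] [Group B] :
    (verbalProductKer W A B).Normal := Subgroup.normalClosure_normal

/-- The verbal product `A ∗_W B := (A ∗ B)/(W(A ∗ B) ∩ [A,B])`. -/
abbrev VerbalProduct (W : Set (FreeGroup ℕ)) (A B : Type*) [Group A] [Group B] : Type _ :=
  Coprod A B ⧸ verbalProductKer W A B

/-- The quotient homomorphism `q : A ∗ B → A ∗_W B`. -/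
def vq (W : Set (FreeGroup ℕ)) (A B : Type*) [Group A] [Group B] :
    Coprod A B →* VerbalProduct W A B :=
  QuotientGroup.mk' (verbalProductKer W A B)

/-- The copy of `A` inside the verbal product `A ∗_W B`. -/
def vinl (W : Set (FreeGroup ℕ)) (A B : Type*) [Group A] [Group B] :
    A →* VerbalProduct W A B := (vq W A B).comp Coprod.inl

/-- The copy of `B` inside the verbal product `A ∗_W B`. -/
def vinr (W : Set (FreeGroup ℕ)) (A B : Type*) [Group A] [Group B] :
    B →* VerbalProduct W A B := (vq W A B).comp Coprod.inr

/-- `[A,B]^w`, the image of `[A,B]` in the verbal product `A ∗_W B`. -/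
def commW (W : Set (FreeGroup ℕ)) (A B : Type*) [Group A] [Group B] :
    Subgroup (VerbalProduct W A B) := (commSubgroup A B).map (vq W A B)

section main
variable {A B : Type*} [Group A] [Group B] (W : Set (FreeGroup ℕ))
open scoped commutatorElement

theorem verbalProductKer_le_comm : verbalProductKer W A B ≤ commSubgroup A B :=
  Subgroup.normalClosure_le_normal (SetLike.coe_subset_coe.mpr inf_le_right)

theorem verbalProductKer_le_ker : verbalProductKer W A B ≤ (pmap A B).ker :=
  le_trans (verbalProductKer_le_comm W) commSubgroup_eq_ker.le

/-- The projection `A ∗_W B →* A × B`. -/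
def pbar : VerbalProduct W A B →* A × B :=
  QuotientGroup.lift (verbalProductKer W A B) (pmap A B)
    (fun _ hx => MonoidHom.mem_ker.mp (verbalProductKer_le_ker W hx))

theorem pbar_vq (x : Coprod A B) : pbar W (vq W A B x) = pmap A B x := rfl

theorem commW_normal : (commW W A B).Normal :=
  (commSubgroup_normal).map (vq W A B) (QuotientGroup.mk'_surjective _)

theorem commW_gen (a : A) (b : B) : ⁅vinl W A B a, vinr W A B b⁆ ∈ commW W A B :=
  Subgroup.mem_map.mpr ⟨⁅Coprod.inl a, Coprod.inr b⁆, comm_gen_mem a b,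
    map_commutatorElement _ _ _⟩

theorem pbar_commW {u : VerbalProduct W A B} (hu : u ∈ commW W A B) : pbar W u = 1 := by
  obtain ⟨c, hc, rfl⟩ := Subgroup.mem_map.mp hu
  rw [pbar_vq]
  exact MonoidHom.mem_ker.mp (commSubgroup_eq_ker.le hc)

theorem pbar_vinl (a : A) : pbar W (vinl W A B a) = (a, 1) := rfl
theorem pbar_vinr (b : B) : pbar W (vinr W A B b) = (1, b) := rfl

theorem verbalProduct_unique_writing' :
    (∀ y : VerbalProduct W A B, ∃ a : A, ∃ b : B, ∃ u ∈ commW W A B,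
        y = vinl W A B a * vinr W A B b * u ∧
        ∀ (a' : A) (b' : B), ∀ u' ∈ commW W A B,
          y = vinl W A B a' * vinr W A B b' * u' → a' = a ∧ b' = b ∧ u' = u) ∧
    (∀ (a a' : A) (b b' : B), ∀ u ∈ commW W A B, ∀ u' ∈ commW W A B,
        ∃ u₂ ∈ commW W A B,
          (vinl W A B a * vinr W A B b * u) * (vinl W A B a' * vinr W A B b' * u') =
            vinl W A B (a * a') * vinr W A B (b * b') * u₂) := by
  have hN := commW_normal (A := A) (B := B) W
  constructor
  · intro y
    obtain ⟨x, rfl⟩ := QuotientGroup.mk'_surjective (verbalProductKer W A B) y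
    set a := (pmap A B x).1 with ha
    set b := (pmap A B x).2 with hb
    have hc : (Coprod.inl a * Coprod.inr b)⁻¹ * x ∈ commSubgroup A B := by
      rw [commSubgroup_eq_ker, MonoidHom.mem_ker, map_mul, map_inv, map_mul]
      have h1 : pmap A B (Coprod.inl a) = (a, 1) := rfl
      have h2 : pmap A B (Coprod.inr b) = (1, b) := rfl
      rw [h1, h2]
      ext <;> simp [ha, hb]
    have hmk : (QuotientGroup.mk' (verbalProductKer W A B)) x = vq W A B x := rfl
    refine ⟨a, b, vq W A B ((Coprod.inl a * Coprod.inr b)⁻¹ * x),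
      Subgroup.mem_map.mpr ⟨_, hc, rfl⟩, ?_, ?_⟩
    · rw [hmk]
      show vq W A B x
          = vq W A B (Coprod.inl a) * vq W A B (Coprod.inr b) *
            vq W A B ((Coprod.inl a * Coprod.inr b)⁻¹ * x)
      rw [← map_mul, ← map_mul]
      congr 1
      group
    · intro a' b' u' hu' heq
      have hp : pmap A B x = (a', b') := by
        have := congrArg (pbar W) heq
        rw [hmk, pbar_vq] at this
        rw [this, map_mul, map_mul, pbar_vinl, pbar_vinr, pbar_commW W hu']
        ext <;> simp
      have haa : a' = a := by rw [ha, hp]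
      have hbb : b' = b := by rw [hb, hp]
      refine ⟨haa, hbb, ?_⟩
      have heq2 : vinl W A B a * vinr W A B b * u'
          = vinl W A B a * vinr W A B b * vq W A B ((Coprod.inl a * Coprod.inr b)⁻¹ * x) := by
        rw [← haa, ← hbb, ← heq, hmk]
        show vq W A B x
            = vq W A B (Coprod.inl a') * vq W A B (Coprod.inr b') *
              vq W A B ((Coprod.inl a' * Coprod.inr b')⁻¹ * x)
        rw [← map_mul, ← map_mul]
        congr 1
        group
      exact mul_left_cancel heq2
  · intro a a' b b' u hu u' hu'
    set α' := vinl W A B a'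
    set β := vinr W A B b
    set β' := vinr W A B b'
    have hinner : β⁻¹ * α'⁻¹ * β * α' ∈ commW W A B := by
      have : β⁻¹ * α'⁻¹ * β * α' = ⁅vinl W A B a'⁻¹, vinr W A B b⁻¹⁆⁻¹ := by
        simp only [map_inv, commutatorElement_def, α', β]
        group
      rw [this]
      exact inv_mem (commW_gen W _ _)
    have h1 : β'⁻¹ * (β⁻¹ * α'⁻¹ * β * α') * (β'⁻¹)⁻¹ ∈ commW W A B :=
      hN.conj_mem _ hinner _
    have h2 : (α' * β')⁻¹ * u * ((α' * β')⁻¹)⁻¹ ∈ commW W A B :=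
      hN.conj_mem _ hu _
    refine ⟨(β'⁻¹ * (β⁻¹ * α'⁻¹ * β * α') * (β'⁻¹)⁻¹) * ((α' * β')⁻¹ * u * ((α' * β')⁻¹)⁻¹) * u',
      mul_mem (mul_mem h1 h2) hu', ?_⟩
    rw [map_mul, map_mul]
    show vinl W A B a * β * u * (α' * β' * u')
        = vinl W A B a * α' * (β * β') * _
    group

end main

/-- Every element of the verbal product `A ∗_W B` has a unique writing `y = a·b·u` with
`a ∈ A`, `b ∈ B`, `u ∈ [A,B]^w`; and products multiply as
`(abu)(a'b'u') = (aa')(bb')u₂` for some `u₂ ∈ [A,B]^w`. -/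
theorem verbalProduct_unique_writing {A B : Type*} [Group A] [Group B]
    (W : Set (FreeGroup ℕ)) :
    (∀ y : VerbalProduct W A B, ∃ a : A, ∃ b : B, ∃ u ∈ commW W A B,
        y = vinl W A B a * vinr W A B b * u ∧
        ∀ (a' : A) (b' : B), ∀ u' ∈ commW W A B,
          y = vinl W A B a' * vinr W A B b' * u' → a' = a ∧ b' = b ∧ u' = u) ∧
    (∀ (a a' : A) (b b' : B), ∀ u ∈ commW W A B, ∀ u' ∈ commW W A B,
        ∃ u₂ ∈ commW W A B,
          (vinl W A B a * vinr W A B b * u) * (vinl W A B a' * vinr W A B b' * u') =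
            vinl W A B (a * a') * vinr W A B (b * b') * u₂) := 
  verbalProduct_unique_writing' W
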